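/- Let Γ be a finite set of 2n+2 distinct points in P^n that lie on a rational normal curve D of degree n. Then Γ is self-associated: any subset of 2n+1 points of Γ imposes the same number of conditions on quadrics in P^n as Γ does. -/

import Mathlib

open MvPolynomial

/-- The space of quadrics vanishing at the points `{p i : i ∈ s}` (points of `Pⁿ` given by
nonzero vectors in `k^{n+1}`), inside the space of all degree-2 homogeneous forms. -/
noncomputable def quadricsThrough {k : Type*} [Field k] {n N : ℕ}
    (p : Fin N → (Fin (n + 1) → k)) (s : Finset (Fin N)) :
    Submodule k (MvPolynomial (Fin (n + 1)) k) :=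
  MvPolynomial.homogeneousSubmodule (Fin (n + 1)) k 2 ⊓
    ⨅ i ∈ s, LinearMap.ker (MvPolynomial.aeval (R := k) (p i)).toLinearMap

/-- The number of conditions imposed on quadrics by the points `{p i : i ∈ s}`:
the codimension of the vanishing subspace in the `binom(n+2,2)`-dimensional space of
quadrics. -/
noncomputable def condsOnQuadrics {k : Type*} [Field k] {n N : ℕ}
    (p : Fin N → (Fin (n + 1) → k)) (s : Finset (Fin N)) : ℕ :=
  Module.finrank k (MvPolynomial.homogeneousSubmodule (Fin (n + 1)) k 2) -
    Module.finrank k (quadricsThrough p s)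

section Aux

open Polynomial

variable {k : Type*} [Field k]

private lemma my_aeval_eq_eval {σ : Type*} (x : σ → k) (R : MvPolynomial σ k) :
    MvPolynomial.aeval x R = MvPolynomial.eval x R := by
  rw [MvPolynomial.aeval_def, Algebra.algebraMap_self, MvPolynomial.eval₂_id]

private lemma my_eval_mul_smul {σ : Type*} {Q : MvPolynomial σ k} {m : ℕ}
    (hQ : Q.IsHomogeneous m) (c : k) (x : σ → k) :
    MvPolynomial.eval (fun i => c * x i) Q = c ^ m * MvPolynomial.eval x Q := by
  classical
  rw [MvPolynomial.eval_eq, MvPolynomial.eval_eq, Finset.mul_sum]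
  refine Finset.sum_congr rfl fun d hd => ?_
  rw [MvPolynomial.mem_support_iff] at hd
  have hdeg : ∑ i ∈ d.support, d i = m := by
    have := hQ hd
    simpa [Finsupp.weight_apply, Finsupp.sum] using this
  calc MvPolynomial.coeff d Q * ∏ i ∈ d.support, (c * x i) ^ d i
      = MvPolynomial.coeff d Q *
        ((∏ i ∈ d.support, c ^ d i) * ∏ i ∈ d.support, x i ^ d i) := by
        rw [← Finset.prod_mul_distrib]
        simp [mul_pow]
    _ = c ^ m * (MvPolynomial.coeff d Q * ∏ i ∈ d.support, x i ^ d i) := by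
        rw [Finset.prod_pow_eq_pow_sum, hdeg]; ring

private lemma my_natDegree_le {σ : Type*} {Q : MvPolynomial σ k} {m : ℕ}
    (hQ : Q.IsHomogeneous m) (φ : σ → k[X]) {nb : ℕ} (hφ : ∀ j, (φ j).natDegree ≤ nb) :
    (MvPolynomial.aeval φ Q).natDegree ≤ nb * m := by
  classical
  conv_lhs => rw [← Q.support_sum_monomial_coeff, map_sum]
  refine Polynomial.natDegree_sum_le_of_forall_le _ _ fun d hd => ?_
  rw [MvPolynomial.aeval_monomial]
  refine (Polynomial.natDegree_mul_le).trans ?_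
  rw [MvPolynomial.mem_support_iff] at hd
  have hdeg : ∑ i ∈ d.support, d i = m := by
    have := hQ hd
    simpa [Finsupp.weight_apply, Finsupp.sum] using this
  have h1 : ((algebraMap k k[X]) (MvPolynomial.coeff d Q)).natDegree = 0 := by
    rw [Polynomial.algebraMap_eq]; exact Polynomial.natDegree_C _
  have h2 : (d.prod fun i e => φ i ^ e).natDegree ≤ nb * m := by
    rw [Finsupp.prod]
    refine (Polynomial.natDegree_prod_le _ _).trans ?_
    calc ∑ i ∈ d.support, (φ i ^ d i).natDegree
        ≤ ∑ i ∈ d.support, d i * nb := by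
          refine Finset.sum_le_sum fun i _ => ?_
          exact (Polynomial.natDegree_pow_le).trans
            (Nat.mul_le_mul_left _ (hφ i))
      _ = (∑ i ∈ d.support, d i) * nb := by rw [Finset.sum_mul]
      _ = nb * m := by rw [hdeg, Nat.mul_comm]
  omega

private lemma my_key {n : ℕ} [CharZero k] (hn : 1 ≤ n)
    (p : Fin (2 * n + 2) → (Fin (n + 1) → k))
    (a b : Fin (2 * n + 2) → k) (hab : ∀ i, ¬(a i = 0 ∧ b i = 0))
    (hp : ∀ i j, p i j = a i ^ (n - (j : ℕ)) * b i ^ (j : ℕ))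
    (hdistinct : ∀ i i', i ≠ i' → ∀ c : k, p i' ≠ c • p i)
    (s : Finset (Fin (2 * n + 2))) (hs : s.card = 2 * n + 1)
    {Q : MvPolynomial (Fin (n + 1)) k} (hQ : Q.IsHomogeneous 2)
    (hvan : ∀ i ∈ s, MvPolynomial.eval (p i) Q = 0) (i₀ : Fin (2 * n + 2)) :
    MvPolynomial.eval (p i₀) Q = 0 := by
  classical
  have hbne : ∀ i, a i = 0 → b i ≠ 0 := fun i hai hbi => hab i ⟨hai, hbi⟩
  have hjle : ∀ j : Fin (n + 1), (j : ℕ) ≤ n := fun j => Nat.lt_succ_iff.mp j.isLt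
  set f : k[X] :=
    MvPolynomial.aeval (fun j : Fin (n + 1) => (Polynomial.X : k[X]) ^ (j : ℕ)) Q with hfdef
  set g : k[X] :=
    MvPolynomial.aeval (fun j : Fin (n + 1) => (Polynomial.X : k[X]) ^ (n - (j : ℕ))) Q with hgdef
  have hfdeg : f.natDegree ≤ 2 * n := by
    rw [hfdef, Nat.mul_comm 2 n]
    exact my_natDegree_le hQ _
      (fun j => by rw [Polynomial.natDegree_X_pow]; exact hjle j)
  have hfeval : ∀ t : k,
      f.eval t = MvPolynomial.eval (fun j : Fin (n + 1) => t ^ (j : ℕ)) Q := by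
    intro t
    rw [hfdef, ← Polynomial.coe_aeval_eq_eval, MvPolynomial.comp_aeval_apply,
      ← my_aeval_eq_eval]
    simp
  have hgeval : ∀ t : k,
      g.eval t = MvPolynomial.eval (fun j : Fin (n + 1) => t ^ (n - (j : ℕ))) Q := by
    intro t
    rw [hgdef, ← Polynomial.coe_aeval_eq_eval, MvPolynomial.comp_aeval_apply,
      ← my_aeval_eq_eval]
    simp
  -- evaluation of `Q` at a point with `a i ≠ 0`
  have hpt : ∀ i, a i ≠ 0 →
      MvPolynomial.eval (p i) Q = (a i ^ n) ^ 2 * f.eval (b i / a i) := by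
    intro i hai
    have hpi : p i = fun j : Fin (n + 1) => a i ^ n * (b i / a i) ^ (j : ℕ) := by
      funext j
      have hj : (j : ℕ) ≤ n := hjle j
      rw [hp i j, div_pow, mul_div_assoc', eq_div_iff (pow_ne_zero _ hai)]
      calc a i ^ (n - (j : ℕ)) * b i ^ (j : ℕ) * a i ^ (j : ℕ)
          = a i ^ (n - (j : ℕ) + (j : ℕ)) * b i ^ (j : ℕ) := by ring
        _ = a i ^ n * b i ^ (j : ℕ) := by rw [Nat.sub_add_cancel hj]
    rw [hpi, my_eval_mul_smul hQ, hfeval]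
  -- evaluation of `Q` at a point with `b i ≠ 0`
  have hptb : ∀ i, b i ≠ 0 →
      MvPolynomial.eval (p i) Q = (b i ^ n) ^ 2 * g.eval (a i / b i) := by
    intro i hbi
    have hpi : p i = fun j : Fin (n + 1) => b i ^ n * (a i / b i) ^ (n - (j : ℕ)) := by
      funext j
      have hj : (j : ℕ) ≤ n := hjle j
      rw [hp i j, div_pow, mul_div_assoc', eq_div_iff (pow_ne_zero _ hbi)]
      calc a i ^ (n - (j : ℕ)) * b i ^ (j : ℕ) * b i ^ (n - (j : ℕ))
          = b i ^ ((j : ℕ) + (n - (j : ℕ))) * a i ^ (n - (j : ℕ)) := by ring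
        _ = b i ^ n * a i ^ (n - (j : ℕ)) := by rw [Nat.add_sub_cancel' hj]
    rw [hpi, my_eval_mul_smul hQ, hgeval]
  -- relation between `g` and `f`
  have hgf : ∀ u : k, u ≠ 0 → g.eval u = (u ^ n) ^ 2 * f.eval (1 / u) := by
    intro u hu
    have hx : (fun j : Fin (n + 1) => u ^ (n - (j : ℕ)))
        = fun j : Fin (n + 1) => u ^ n * (1 / u) ^ (j : ℕ) := by
      funext j
      have hj : (j : ℕ) ≤ n := hjle j
      rw [div_pow, one_pow, mul_div_assoc', mul_one, eq_div_iff (pow_ne_zero _ hu)]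
      calc u ^ (n - (j : ℕ)) * u ^ (j : ℕ) = u ^ (n - (j : ℕ) + (j : ℕ)) := by ring
        _ = u ^ n := by rw [Nat.sub_add_cancel hj]
    rw [hgeval, hx, my_eval_mul_smul hQ, hfeval]
  -- parameters of distinct points with `a ≠ 0` are distinct
  have ht_inj : ∀ i i', i ≠ i' → a i ≠ 0 → a i' ≠ 0 → b i / a i ≠ b i' / a i' := by
    intro i i' hne hai hai' heq
    refine hdistinct i i' hne ((a i' / a i) ^ n) ?_
    have hcross : b i * a i' = b i' * a i := (div_eq_div_iff hai hai').mp heq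
    funext j
    have hj : (j : ℕ) ≤ n := hjle j
    have e1 : a i ^ n = a i ^ (n - (j : ℕ)) * a i ^ (j : ℕ) := by
      rw [← pow_add, Nat.sub_add_cancel hj]
    have e2 : a i' ^ n = a i' ^ (n - (j : ℕ)) * a i' ^ (j : ℕ) := by
      rw [← pow_add, Nat.sub_add_cancel hj]
    have e3 : b i' ^ (j : ℕ) * a i ^ (j : ℕ) = b i ^ (j : ℕ) * a i' ^ (j : ℕ) := by
      rw [← mul_pow, ← mul_pow, ← hcross, mul_comm (b i) (a i')]
    show p i' j = (a i' / a i) ^ n * p i j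
    rw [hp, hp, div_pow, div_mul_eq_mul_div, eq_div_iff (pow_ne_zero _ hai), e1, e2]
    linear_combination (a i' ^ (n - (j : ℕ)) * a i ^ (n - (j : ℕ))) * e3
  -- at most one point has `a = 0`
  have hAzero : ∀ i i', a i = 0 → a i' = 0 → i = i' := by
    intro i i' hi hi'
    by_contra hne
    refine hdistinct i i' hne ((b i' / b i) ^ n) ?_
    funext j
    show p i' j = (b i' / b i) ^ n * p i j
    rw [hp, hp, hi, hi']
    rcases eq_or_lt_of_le (hjle j) with hj | hj
    · have hbi := hbne i hi
      rw [hj, Nat.sub_self, pow_zero]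
      field_simp
      rw [div_pow, div_mul_cancel₀ _ (pow_ne_zero _ hbi)]
    · rw [zero_pow (by omega : n - (j : ℕ) ≠ 0)]
      ring
  -- the main claim : `f = 0`
  have hf0 : f = 0 := by
    by_cases hall : ∀ i ∈ s, a i ≠ 0
    · refine Polynomial.eq_zero_of_natDegree_lt_card_of_eval_eq_zero' f
        (s.image fun i => b i / a i) ?_ ?_
      · intro t ht
        obtain ⟨i, hi, rfl⟩ := Finset.mem_image.mp ht
        have h := hvan i hi
        rw [hpt i (hall i hi)] at h
        exact (mul_eq_zero.mp h).resolve_left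
          (pow_ne_zero 2 (pow_ne_zero n (hall i hi)))
      · have hcard : (s.image fun i => b i / a i).card = 2 * n + 1 := by
          rw [Finset.card_image_of_injOn, hs]
          intro i hi i' hi' heq
          by_contra hne
          exact ht_inj i i' hne (hall i hi) (hall i' hi') heq
        omega
    · push_neg at hall
      obtain ⟨i₁, hi₁s, hi₁⟩ := hall
      by_contra hfne
      set s' := s.erase i₁ with hs'def
      have hs' : s'.card = 2 * n := by
        rw [hs'def, Finset.card_erase_of_mem hi₁s, hs]
        omega
      have ha' : ∀ i ∈ s', a i ≠ 0 := fun i hi hai =>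
        (Finset.ne_of_mem_erase hi) (hAzero i i₁ hai hi₁)
      set T := s'.image fun i => b i / a i with hTdef
      have hT : T.card = 2 * n := by
        rw [hTdef, Finset.card_image_of_injOn, hs']
        intro i hi i' hi' heq
        by_contra hne
        exact ht_inj i i' hne (ha' i hi) (ha' i' hi') heq
      have hroot : ∀ t ∈ T, f.eval t = 0 := by
        intro t ht
        obtain ⟨i, hi, rfl⟩ := Finset.mem_image.mp ht
        have h := hvan i (Finset.mem_of_mem_erase hi)
        rw [hpt i (ha' i hi)] at h
        exact (mul_eq_zero.mp h).resolve_left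
          (pow_ne_zero 2 (pow_ne_zero n (ha' i hi)))
      have hdvd : (∏ t ∈ T, (Polynomial.X - Polynomial.C t)) ∣ f := by
        refine Finset.prod_dvd_of_coprime ?_ ?_
        · intro t ht t' ht' hne
          exact Polynomial.isCoprime_X_sub_C_of_isUnit_sub
            (IsUnit.mk0 _ (sub_ne_zero_of_ne hne))
        · intro t ht
          exact (Polynomial.dvd_iff_isRoot).mpr (hroot t ht)
      obtain ⟨q, hq⟩ := hdvd
      have hPne : (∏ t ∈ T, (Polynomial.X - Polynomial.C t)) ≠ 0 :=
        Finset.prod_ne_zero_iff.mpr fun t _ => Polynomial.X_sub_C_ne_zero t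
      have hP : (∏ t ∈ T, (Polynomial.X - Polynomial.C t)).natDegree = 2 * n := by
        rw [Polynomial.natDegree_prod _ _ fun t _ => Polynomial.X_sub_C_ne_zero t]
        simp [Polynomial.natDegree_X_sub_C, hT]
      have hqne : q ≠ 0 := fun h => hfne (by rw [hq, h, mul_zero])
      have hqdeg : q.natDegree = 0 := by
        have hmul := Polynomial.natDegree_mul hPne hqne
        rw [← hq] at hmul
        omega
      obtain ⟨c, hc⟩ := Polynomial.natDegree_eq_zero.mp hqdeg
      have hcne : c ≠ 0 := fun h => hqne (by rw [← hc, h, map_zero])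
      set h : k[X] := Polynomial.C c * ∏ t ∈ T, (1 - Polynomial.C t * Polynomial.X)
        with hhdef
      have hgh : g = h := by
        have hagree : ∀ u : k, u ≠ 0 → g.eval u = h.eval u := by
          intro u hu
          rw [hgf u hu, hq, ← hc]
          have e : (u ^ n) ^ 2 = ∏ _t ∈ T, u := by
            rw [Finset.prod_const, hT, ← pow_mul, Nat.mul_comm]
          rw [Polynomial.eval_mul, Polynomial.eval_prod]
          simp only [Polynomial.eval_sub, Polynomial.eval_X, Polynomial.eval_C]
          rw [hhdef, Polynomial.eval_mul, Polynomial.eval_prod, Polynomial.eval_C]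
          simp only [Polynomial.eval_sub, Polynomial.eval_one, Polynomial.eval_mul,
            Polynomial.eval_C, Polynomial.eval_X]
          rw [e]
          rw [show ((∏ _t ∈ T, u) * ((∏ t ∈ T, (1 / u - t)) * c))
              = (∏ t ∈ T, u * (1 / u - t)) * c by
            rw [Finset.prod_mul_distrib]; ring]
          rw [mul_comm]
          congr 1
          refine Finset.prod_congr rfl fun t _ => ?_
          field_simp
        have hsub : (g - h) = 0 := by
          refine Polynomial.eq_zero_of_infinite_isRoot _ ?_
          refine Set.Infinite.mono ?_
            (Set.Finite.infinite_compl (Set.finite_singleton (0 : k)))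
          intro x hx
          have hx0 : x ≠ 0 := by simpa using hx
          simp only [Set.mem_setOf_eq, Polynomial.IsRoot, Polynomial.eval_sub,
            hagree x hx0, sub_self]
        exact sub_eq_zero.mp hsub
      have h0 : g.eval 0 = 0 := by
        have h := hvan i₁ hi₁s
        rw [hptb i₁ (hbne i₁ hi₁)] at h
        have h' : g.eval (a i₁ / b i₁) = 0 :=
          (mul_eq_zero.mp h).resolve_left
            (pow_ne_zero 2 (pow_ne_zero n (hbne i₁ hi₁)))
        rwa [hi₁, zero_div] at h'
      rw [hgh, hhdef] at h0
      simp only [Polynomial.eval_mul, Polynomial.eval_prod, Polynomial.eval_sub,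
        Polynomial.eval_one, Polynomial.eval_C, Polynomial.eval_X, mul_zero, sub_zero,
        Finset.prod_const_one, mul_one] at h0
      exact hcne h0
  -- then also `g = 0`
  have hg0 : g = 0 := by
    refine Polynomial.eq_zero_of_infinite_isRoot _ ?_
    refine Set.Infinite.mono ?_
      (Set.Finite.infinite_compl (Set.finite_singleton (0 : k)))
    intro x hx
    have hx0 : x ≠ 0 := by simpa using hx
    simp only [Set.mem_setOf_eq, Polynomial.IsRoot, hgf x hx0, hf0,
      Polynomial.eval_zero, mul_zero]
  -- conclusion
  rcases eq_or_ne (a i₀) 0 with hai | hai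
  · rw [hptb i₀ (hbne i₀ hai), hg0, Polynomial.eval_zero, mul_zero]
  · rw [hpt i₀ hai, hf0, Polynomial.eval_zero, mul_zero]

end Aux

/-- Let `Γ = {p 0, …, p (2n+1)}` be `2n+2` distinct points of `Pⁿ` lying on a rational
normal curve of degree `n` (each point is `[aⁿ : aⁿ⁻¹b : ⋯ : bⁿ]` for some `(a,b) ≠ (0,0)`).
Then `Γ` is self-associated: every subset of `2n+1` of the points imposes the same number
of conditions on quadrics as all of `Γ`. -/
theorem stmt_9 (k : Type*) [Field k] [CharZero k] (n : ℕ) (hn : 1 ≤ n)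
    (p : Fin (2 * n + 2) → (Fin (n + 1) → k))
    (honcurve : ∀ i, ∃ a b : k, ¬(a = 0 ∧ b = 0) ∧
      ∀ j : Fin (n + 1), p i j = a ^ (n - (j : ℕ)) * b ^ (j : ℕ))
    (hdistinct : ∀ i i', i ≠ i' → ∀ c : k, p i' ≠ c • p i) :
    ∀ s : Finset (Fin (2 * n + 2)), s.card = 2 * n + 1 →
      condsOnQuadrics p s = condsOnQuadrics p Finset.univ := by
  intro s hs
  choose a b hab hp using honcurve
  have hkey : quadricsThrough p s = quadricsThrough p Finset.univ := by
    unfold quadricsThrough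
    apply le_antisymm
    · intro Q hQ
      rw [Submodule.mem_inf] at hQ ⊢
      obtain ⟨hQ1, hQ2⟩ := hQ
      refine ⟨hQ1, ?_⟩
      simp only [Submodule.mem_iInf, LinearMap.mem_ker, AlgHom.toLinearMap_apply] at hQ2 ⊢
      intro i _
      rw [my_aeval_eq_eval]
      refine my_key hn p a b hab hp hdistinct s hs
        hQ1 ?_ i
      intro i' hi'
      rw [← my_aeval_eq_eval]
      exact hQ2 i' hi'
    · refine inf_le_inf_left _ ?_
      refine le_iInf fun i => le_iInf fun hi => ?_
      exact iInf_le_of_le i (iInf_le _ (Finset.mem_univ i))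
  rw [condsOnQuadrics, condsOnQuadrics, hkey]
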